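/- With the recursive definition of SHP_t(X) as above, if for all t and all ω ∈ Ω_t one has ℝ^d_+ \ {0} ⊆ int K_t(ω), then the recession cone of SHP_t(X)(ω) contains K_t(ω), and hence ℝ^d_+ \ {0} ⊆ int((SHP_t(X)(ω))_∞) for every t and ω ∈ Ω_t. -/

import Mathlib

open Pointwise

/-- The recession cone of a convex set `A ⊆ ℝ^d`. -/
def recCone {d : ℕ} (A : Set (Fin d → ℝ)) : Set (Fin d → ℝ) :=
  {x | ∀ t : ℝ, 0 < t → ∀ a ∈ A, a + t • x ∈ A}

lemma cone_add_mem {d : ℕ} {K : Set (Fin d → ℝ)} (hconv : Convex ℝ K)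
    (hcone : ∀ x ∈ K, ∀ r : ℝ, 0 ≤ r → r • x ∈ K)
    {a b : Fin d → ℝ} (ha : a ∈ K) (hb : b ∈ K) : a + b ∈ K := by
  have h := hconv ha hb (by norm_num : (0:ℝ) ≤ 1/2) (by norm_num : (0:ℝ) ≤ 1/2) (by norm_num)
  have h2 := hcone _ h 2 (by norm_num)
  have : (2:ℝ) • ((1/2 : ℝ) • a + (1/2 : ℝ) • b) = a + b := by
    rw [smul_add, smul_smul, smul_smul]; norm_num
  rwa [this] at h2

lemma cone_sub_recCone {d : ℕ} {K S : Set (Fin d → ℝ)} (hconv : Convex ℝ K)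
    (hcone : ∀ x ∈ K, ∀ r : ℝ, 0 ≤ r → r • x ∈ K) :
    K ⊆ recCone (S + K) := by
  intro k hk t ht a ha
  obtain ⟨s, hs, c, hc, rfl⟩ := ha
  have htk : t • k ∈ K := hcone _ hk _ ht.le
  have : c + t • k ∈ K := cone_add_mem hconv hcone hc htk
  exact ⟨s, hs, c + t • k, this, by exact (add_assoc s c (t • k)).symm⟩

theorem shp_recession_cone
    (d T : ℕ) (ν : ℕ → Type) [∀ t, Fintype (ν t)] [∀ t, Nonempty (ν t)]
    (parent : ∀ t, ν (t + 1) → ν t) (hsurj : ∀ t, Function.Surjective (parent t))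
    (K : ∀ t, ν t → Set (Fin d → ℝ))
    (hKconv : ∀ t ω, Convex ℝ (K t ω))
    (hKcone : ∀ t ω, ∀ x ∈ K t ω, ∀ r : ℝ, 0 ≤ r → r • x ∈ K t ω)
    (hKorth : ∀ t ω, ∀ x : Fin d → ℝ, (∀ i, 0 ≤ x i) → x ∈ K t ω)
    (hKint : ∀ t ω, ∀ v : Fin d → ℝ, (∀ i, 0 ≤ v i) → v ≠ 0 →
      v ∈ interior (K t ω))
    (X : ν T → Fin d → ℝ)
    (SHP : ∀ t, ν t → Set (Fin d → ℝ))
    (hterm : ∀ ω : ν T, SHP T ω = {X ω} + K T ω)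
    (hrec : ∀ t, t < T → ∀ ω : ν t,
      SHP t ω = (⋂ ω' ∈ {b : ν (t + 1) | parent t b = ω}, SHP (t + 1) ω') + K t ω) :
    ∀ t, t ≤ T → ∀ ω : ν t,
      K t ω ⊆ recCone (SHP t ω) ∧
      (∀ v : Fin d → ℝ, (∀ i, 0 ≤ v i) → v ≠ 0 →
        v ∈ interior (recCone (SHP t ω))) := by
  intro t htT ω
  have hsub : K t ω ⊆ recCone (SHP t ω) := by
    rcases lt_or_eq_of_le htT with h | h
    · rw [hrec t h ω]
      exact cone_sub_recCone (hKconv t ω) (hKcone t ω)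
    · subst h
      rw [hterm ω]
      exact cone_sub_recCone (hKconv t ω) (hKcone t ω)
  refine ⟨hsub, fun v hv hv0 => interior_mono hsub (hKint t ω v hv hv0)⟩
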